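/- Let K ⊂ ℝⁿ be a compact convex set with more than one point and let f be a unit vector in ℝⁿ. Then for every ε > 0 there exist a unit vector g ∈ ℝⁿ with ‖f − g‖ ≤ ε and opposite closed halfspaces S and T with common normal direction g, both supporting K, such that K ∩ S and K ∩ T are distinct singletons. -/

import Mathlib

open scoped RealInnerProductSpace
open Set Metric MeasureTheory
open scoped NNReal

/-- The support function of a set `K`. -/
noncomputable def supFn {n : ℕ} (K : Set (EuclideanSpace ℝ (Fin n)))
    (x : EuclideanSpace ℝ (Fin n)) : ℝ :=
  sSup ((fun y => ⟪x, y⟫) '' K)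

lemma supFn_le {n : ℕ} {K : Set (EuclideanSpace ℝ (Fin n))} (hc : IsCompact K)
    {y : EuclideanSpace ℝ (Fin n)} (hy : y ∈ K) (x : EuclideanSpace ℝ (Fin n)) :
    ⟪x, y⟫ ≤ supFn K x := by
  refine le_csSup ?_ (Set.mem_image_of_mem _ hy)
  exact (hc.image (Continuous.inner continuous_const continuous_id)).bddAbove

lemma supFn_eq_of_max {n : ℕ} {K : Set (EuclideanSpace ℝ (Fin n))}
    {u g : EuclideanSpace ℝ (Fin n)} (hu : u ∈ K)
    (hmax : ∀ y ∈ K, ⟪g, y⟫ ≤ ⟪g, u⟫) : supFn K g = ⟪g, u⟫ := by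
  refine IsGreatest.csSup_eq ⟨Set.mem_image_of_mem _ hu, ?_⟩
  rintro z ⟨y, hy, rfl⟩
  exact hmax y hy

/-- If the support function is differentiable at `g`, the maximizer of `⟪g, ·⟫` on `K`
is unique. -/
lemma uniqueMax {n : ℕ} {K : Set (EuclideanSpace ℝ (Fin n))} (hc : IsCompact K)
    {g u v : EuclideanSpace ℝ (Fin n)} (hd : DifferentiableAt ℝ (supFn K) g)
    (hu : u ∈ K) (hv : v ∈ K)
    (hmu : ∀ y ∈ K, ⟪g, y⟫ ≤ ⟪g, u⟫) (hmv : ∀ y ∈ K, ⟪g, y⟫ ≤ ⟪g, v⟫) : u = v := by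
  have key : ∀ w : EuclideanSpace ℝ (Fin n), w ∈ K → (∀ y ∈ K, ⟪g, y⟫ ≤ ⟪g, w⟫) →
      fderiv ℝ (supFn K) g = (innerSL ℝ w : EuclideanSpace ℝ (Fin n) →L[ℝ] ℝ) := by
    intro w hw hmw
    set L : EuclideanSpace ℝ (Fin n) →L[ℝ] ℝ := innerSL ℝ w
    have hLmin : IsLocalMin (fun x => supFn K x - L x) g := by
      apply Filter.Eventually.of_forall
      intro x
      have h1 : supFn K g = ⟪g, w⟫ := supFn_eq_of_max hw hmw
      have h2 : L x ≤ supFn K x := by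
        have h2' : L x = ⟪x, w⟫ := real_inner_comm x w
        rw [h2']; exact supFn_le hc hw x
      have h3 : L g = ⟪g, w⟫ := real_inner_comm g w
      simp only [h1, h3]
      linarith
    have hdsub : fderiv ℝ (fun x => supFn K x - L x) g = fderiv ℝ (supFn K) g - L := by
      rw [fderiv_fun_sub hd L.differentiableAt, L.fderiv]
    have := hLmin.fderiv_eq_zero
    rw [hdsub] at this
    exact sub_eq_zero.mp this
  have h1 := key u hu hmu
  have h2 := key v hv hmv
  have h3 : (innerSL ℝ u : EuclideanSpace ℝ (Fin n) →L[ℝ] ℝ) = innerSL ℝ v := h1 ▸ h2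
  have h4 : ⟪u, u - v⟫ = ⟪v, u - v⟫ := by
    have := congrFun (congrArg DFunLike.coe h3) (u - v)
    simpa using this
  have h5 : ⟪u - v, u - v⟫ = 0 := by
    rw [inner_sub_left]
    linarith [h4]
  have := inner_self_eq_zero.mp h5
  exact sub_eq_zero.mp this

lemma lipschitz_supFn {n : ℕ} {K : Set (EuclideanSpace ℝ (Fin n))} (hc : IsCompact K)
    (hne : K.Nonempty) : ∃ C : ℝ≥0, LipschitzWith C (supFn K) := by
  obtain ⟨R, hR⟩ := (isBounded_iff_forall_norm_le).mp hc.isBounded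
  have hR0 : 0 ≤ R := le_trans (norm_nonneg _) (hR _ hne.choose_spec)
  refine ⟨R.toNNReal, LipschitzWith.of_dist_le_mul fun x x' => ?_⟩
  have key : ∀ a b : EuclideanSpace ℝ (Fin n), supFn K a ≤ supFn K b + R * ‖a - b‖ := by
    intro a b
    refine csSup_le (hne.image _) ?_
    rintro z ⟨y, hy, rfl⟩
    have h1 : ⟪a, y⟫ = ⟪b, y⟫ + ⟪a - b, y⟫ := by
      rw [inner_sub_left]; ring
    have h2 : ⟪a - b, y⟫ ≤ ‖a - b‖ * ‖y‖ := real_inner_le_norm _ _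
    have h3 : ⟪b, y⟫ ≤ supFn K b := supFn_le hc hy b
    have h4 : ‖a - b‖ * ‖y‖ ≤ ‖a - b‖ * R :=
      mul_le_mul_of_nonneg_left (hR y hy) (norm_nonneg _)
    calc ⟪a, y⟫ = ⟪b, y⟫ + ⟪a - b, y⟫ := h1
      _ ≤ supFn K b + ‖a - b‖ * R := by linarith
      _ = supFn K b + R * ‖a - b‖ := by ring
  rw [Real.dist_eq, Real.coe_toNNReal _ hR0, dist_eq_norm]
  rw [abs_sub_le_iff]
  constructor
  · have := key x x'; linarith
  · have := key x' x
    rw [show ‖x' - x‖ = ‖x - x'‖ from norm_sub_rev _ _] at this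
    linarith

/-- For any compact convex set `K ⊆ ℝⁿ` with more than one point, any unit vector `f`
and any `ε > 0`, there are a unit vector `g` with `‖f - g‖ ≤ ε` and opposite closed
halfspaces `S = {y : α ≤ ⟪g, y⟫}` and `T = {y : ⟪g, y⟫ ≤ β}` (with `β ≤ α`), both
supporting `K`, such that `K ∩ S` and `K ∩ T` are distinct singletons. -/
theorem exists_opposite_supporting_halfspaces_singleton_inters
    (n : ℕ) (K : Set (EuclideanSpace ℝ (Fin n)))
    (hc : IsCompact K) (hcv : Convex ℝ K)
    (hpts : ∃ a ∈ K, ∃ b ∈ K, a ≠ b)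
    (f : EuclideanSpace ℝ (Fin n)) (hf : ‖f‖ = 1) (ε : ℝ) (hε : 0 < ε) :
    ∃ (g : EuclideanSpace ℝ (Fin n)) (α β : ℝ), ‖g‖ = 1 ∧ ‖f - g‖ ≤ ε ∧ β ≤ α ∧
      (∀ y ∈ K, β ≤ ⟪g, y⟫ ∧ ⟪g, y⟫ ≤ α) ∧
      ∃ u v : EuclideanSpace ℝ (Fin n), u ≠ v ∧
        K ∩ {y | α ≤ ⟪g, y⟫} = {u} ∧ K ∩ {y | ⟪g, y⟫ ≤ β} = {v} := by
  obtain ⟨a, ha, b, hb, hab⟩ := hpts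
  have hne : K.Nonempty := ⟨a, ha⟩
  set δ : ℝ := min (ε / 2) (1 / 2) with hδdef
  have hδpos : 0 < δ := lt_min (by linarith) (by norm_num)
  have hδhalf : δ ≤ 1 / 2 := min_le_right _ _
  have hδε : δ ≤ ε / 2 := min_le_left _ _
  -- Rademacher: supFn is differentiable a.e.
  obtain ⟨C, hL⟩ := lipschitz_supFn hc hne
  have hae : ∀ᵐ x ∂(volume : Measure (EuclideanSpace ℝ (Fin n))),
      DifferentiableAt ℝ (supFn K) x := hL.ae_differentiableAt
  set N : Set (EuclideanSpace ℝ (Fin n)) := {x | ¬ DifferentiableAt ℝ (supFn K) x} with hN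
  have hN0 : volume N = 0 := hae
  have hN0' : volume ((fun x : EuclideanSpace ℝ (Fin n) => -x) ⁻¹' N) = 0 :=
    (Measure.measurePreserving_neg
      (volume : Measure (EuclideanSpace ℝ (Fin n)))).quasiMeasurePreserving.preimage_null hN0
  have hball : 0 < volume (ball f δ) := measure_ball_pos _ _ hδpos
  have hkey : (ball f δ \ (N ∪ (fun x : EuclideanSpace ℝ (Fin n) => -x) ⁻¹' N)).Nonempty := by
    apply nonempty_of_measure_ne_zero (μ := volume)
    rw [measure_diff_null (measure_union_null hN0 hN0')]
    exact hball.ne'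
  obtain ⟨g', hg'ball, hg'bad⟩ := hkey
  rw [Set.mem_union, not_or] at hg'bad
  have hgd : DifferentiableAt ℝ (supFn K) g' := not_not.mp hg'bad.1
  have hgd' : DifferentiableAt ℝ (supFn K) (-g') := not_not.mp hg'bad.2
  have hfg' : ‖f - g'‖ < δ := by
    rw [mem_ball, dist_comm, dist_eq_norm] at hg'ball; exact hg'ball
  have hg'norm : 1 / 2 ≤ ‖g'‖ := by
    have h1 : ‖f‖ - ‖g'‖ ≤ ‖f - g'‖ := norm_sub_norm_le _ _
    rw [hf] at h1; linarith
  have hg'ne : g' ≠ 0 := by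
    intro h; rw [h, norm_zero] at hg'norm; linarith
  have hg'pos : 0 < ‖g'‖ := by linarith
  set g : EuclideanSpace ℝ (Fin n) := ‖g'‖⁻¹ • g' with hg
  have hgnorm : ‖g‖ = 1 := by
    rw [hg, norm_smul, norm_inv, norm_norm, inv_mul_cancel₀ hg'pos.ne']
  have hfg : ‖f - g‖ ≤ ε := by
    have h1 : ‖g' - g‖ = |‖g'‖ - 1| := by
      have hsub : g' - g = (1 - ‖g'‖⁻¹) • g' := by
        rw [hg]; module
      have e : (1 - ‖g'‖⁻¹) * ‖g'‖ = ‖g'‖ - 1 := by field_simp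
      calc ‖g' - g‖ = |1 - ‖g'‖⁻¹| * ‖g'‖ := by
            rw [hsub, norm_smul, Real.norm_eq_abs]
        _ = |(1 - ‖g'‖⁻¹) * ‖g'‖| := by
            rw [abs_mul, abs_of_nonneg (norm_nonneg _)]
        _ = |‖g'‖ - 1| := by rw [e]
    have h2 : |‖g'‖ - 1| ≤ ‖g' - f‖ := by
      have := abs_norm_sub_norm_le g' f
      rwa [hf] at this
    have h3 : ‖f - g‖ ≤ ‖f - g'‖ + ‖g' - g‖ := by
      have := norm_add_le (f - g') (g' - g)
      simpa using this
    rw [norm_sub_rev g' f] at h2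
    calc ‖f - g‖ ≤ ‖f - g'‖ + ‖g' - g‖ := h3
      _ ≤ δ + δ := by rw [h1]; linarith
      _ ≤ ε := by linarith
  -- maximizer and minimizer
  have hcont : ∀ w : EuclideanSpace ℝ (Fin n),
      ContinuousOn (fun y => ⟪w, y⟫) K :=
    fun w => (Continuous.inner continuous_const continuous_id).continuousOn
  obtain ⟨u, hu, humax'⟩ := hc.exists_isMaxOn hne (hcont g')
  obtain ⟨v, hv, hvmax'⟩ := hc.exists_isMaxOn hne (hcont (-g'))
  have humax : ∀ y ∈ K, ⟪g', y⟫ ≤ ⟪g', u⟫ := fun y hy => humax' hy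
  have hvmax : ∀ y ∈ K, ⟪-g', y⟫ ≤ ⟪-g', v⟫ := fun y hy => hvmax' hy
  have hvmin : ∀ y ∈ K, ⟪g', v⟫ ≤ ⟪g', y⟫ := by
    intro y hy
    have := hvmax y hy
    simp only [inner_neg_left] at this
    linarith
  -- relation between g and g'
  have hinner : ∀ y : EuclideanSpace ℝ (Fin n), ⟪g, y⟫ = ‖g'‖⁻¹ * ⟪g', y⟫ := by
    intro y; rw [hg, real_inner_smul_left]
  refine ⟨g, ⟪g, u⟫, ⟪g, v⟫, hgnorm, hfg, ?_, ?_, u, v, ?_, ?_, ?_⟩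
  · -- β ≤ α
    rw [hinner, hinner]
    exact mul_le_mul_of_nonneg_left (humax v hv) (inv_nonneg.mpr (norm_nonneg _))
  · -- bounds
    intro y hy
    constructor
    · rw [hinner, hinner]
      exact mul_le_mul_of_nonneg_left (hvmin y hy) (inv_nonneg.mpr (norm_nonneg _))
    · rw [hinner, hinner]
      exact mul_le_mul_of_nonneg_left (humax y hy) (inv_nonneg.mpr (norm_nonneg _))
  · -- u ≠ v
    intro huv
    have heq : ∀ y ∈ K, ⟪g', y⟫ = ⟪g', u⟫ := by
      intro y hy
      have h1 := humax y hy
      have h2 := hvmin y hy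
      rw [huv] at h1 ⊢
      linarith
    have hamax : ∀ y ∈ K, ⟪g', y⟫ ≤ ⟪g', a⟫ := by
      intro y hy; rw [heq y hy, heq a ha]
    have hbmax : ∀ y ∈ K, ⟪g', y⟫ ≤ ⟪g', b⟫ := by
      intro y hy; rw [heq y hy, heq b hb]
    exact hab (uniqueMax hc hgd ha hb hamax hbmax)
  · -- K ∩ S = {u}
    ext y
    simp only [Set.mem_inter_iff, Set.mem_setOf_eq, Set.mem_singleton_iff]
    constructor
    · rintro ⟨hyK, hyα⟩
      apply uniqueMax hc hgd hyK hu _ humax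
      intro z hz
      have h1 : ⟪g, z⟫ ≤ ⟪g, u⟫ := by
        rw [hinner, hinner]
        exact mul_le_mul_of_nonneg_left (humax z hz) (inv_nonneg.mpr (norm_nonneg _))
      have h2 : ⟪g, u⟫ ≤ ⟪g, y⟫ := hyα
      have h3 : ⟪g, z⟫ ≤ ⟪g, y⟫ := le_trans h1 h2
      rw [hinner, hinner] at h3
      exact le_of_mul_le_mul_left h3 (inv_pos.mpr hg'pos)
    · rintro rfl
      exact ⟨hu, le_refl _⟩
  · -- K ∩ T = {v}
    ext y
    simp only [Set.mem_inter_iff, Set.mem_setOf_eq, Set.mem_singleton_iff]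
    constructor
    · rintro ⟨hyK, hyβ⟩
      apply uniqueMax hc hgd' hyK hv _ hvmax
      intro z hz
      have h1 : ⟪g, v⟫ ≤ ⟪g, z⟫ := by
        rw [hinner, hinner]
        exact mul_le_mul_of_nonneg_left (hvmin z hz) (inv_nonneg.mpr (norm_nonneg _))
      have h2 : ⟪g, y⟫ ≤ ⟪g, v⟫ := hyβ
      have h3 : ⟪g, y⟫ ≤ ⟪g, z⟫ := le_trans h2 h1
      rw [hinner, hinner] at h3
      have h4 : ⟪g', y⟫ ≤ ⟪g', z⟫ := le_of_mul_le_mul_left h3 (inv_pos.mpr hg'pos)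
      simp only [inner_neg_left]
      linarith
    · rintro rfl
      exact ⟨hv, le_refl _⟩
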